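/- Fix r > 0 and the setup of Φ[a,b,c,d]. Any five product vectors x_{α₁} ⊗ y_{α₁}, ..., x_{α₅} ⊗ y_{α₅} with |α_j| = r and the α_j pairwise distinct are linearly independent in ℂ² ⊗ ℂ⁴. -/

import Mathlib

/-- Any five product vectors `x_{α_j} ⊗ y_{α_j}` with `|α_j| = r` and the `α_j`
pairwise distinct are linearly independent in `ℂ² ⊗ ℂ⁴`. -/
theorem five_product_vectors_linearIndependent (a b c d e f g h k : ℝ)
    (ha : 0 < a) (hb : 0 < b) (hc : 0 < c) (hd : 0 < d) (hab : 1 < a * b)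
    (hg : g = Real.sqrt (a * c * d))
    (he : e = a * (c + d) * c / (a * b - 1))
    (hf : f = a * (c + d) * d / (a * b - 1))
    (hh : h = b * e - c ^ 2) (hk : k = b * f - d ^ 2)
    (r : ℝ) (hr : 0 < r) (α : Fin 5 → ℂ)
    (habs : ∀ j, ‖α j‖ = r) (hinj : Function.Injective α) :
    LinearIndependent ℂ (fun j : Fin 5 => fun p : Fin 2 × Fin 4 =>
      (![1, starRingEnd ℂ (α j)] : Fin 2 → ℂ) p.1 *
      (![(g : ℂ) * α j * (1 - α j),
         α j * ((h : ℂ) - (c : ℂ) * (d : ℂ) * (α j + starRingEnd ℂ (α j)) +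
           (k : ℂ) * (‖α j‖ : ℂ) ^ 2),
         -((e : ℂ) + (f : ℂ) * (‖α j‖ : ℂ) ^ 2),
         -(starRingEnd ℂ (α j)) * ((c : ℂ) + (d : ℂ) * α j)] : Fin 4 → ℂ) p.2) := by
  have hab1 : (0:ℝ) < a * b - 1 := by linarith
  have he0 : (0:ℝ) < e := by rw [he]; positivity
  have hf0 : (0:ℝ) < f := by rw [hf]; positivity
  have hg0 : (0:ℝ) < g := by rw [hg]; positivity
  have hα0 : ∀ j, α j ≠ 0 := by
    intro j hj
    have := habs j
    rw [hj, norm_zero] at this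
    exact absurd this.symm (ne_of_gt hr)
  have hconj : ∀ j, starRingEnd ℂ (α j) * α j = (r:ℂ)^2 := by
    intro j
    rw [mul_comm, Complex.mul_conj, ← Complex.sq_norm, habs j]
    push_cast; ring
  have hXne : ((e:ℂ) + (f:ℂ) * (r:ℂ)^2) ≠ 0 := by
    have h1 : (0:ℝ) < e + f * r^2 := by positivity
    have h2 : ((e + f * r^2 : ℝ) : ℂ) ≠ 0 := by
      exact_mod_cast h1.ne'
    push_cast at h2
    convert h2 using 2
  have hrC : (r:ℂ) ≠ 0 := by exact_mod_cast hr.ne'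
  have hgC : (g:ℂ) ≠ 0 := by exact_mod_cast hg0.ne'
  have hcC : (c:ℂ) ≠ 0 := by exact_mod_cast hc.ne'
  rw [Fintype.linearIndependent_iff]
  intro t ht j
  have key : ∀ (i : Fin 2) (l : Fin 4),
      ∑ j, t j * ((![1, starRingEnd ℂ (α j)] : Fin 2 → ℂ) i *
        (![(g : ℂ) * α j * (1 - α j),
          α j * ((h : ℂ) - (c : ℂ) * (d : ℂ) * (α j + starRingEnd ℂ (α j)) +
            (k : ℂ) * (r : ℂ) ^ 2),
          -((e : ℂ) + (f : ℂ) * (r : ℂ) ^ 2),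
          -(starRingEnd ℂ (α j)) * ((c : ℂ) + (d : ℂ) * α j)] : Fin 4 → ℂ) l) = 0 := by
    intro i l
    have h' := congrFun ht (i, l)
    simpa [Finset.sum_apply, habs] using h'
  have S0 : ∑ j, t j = 0 := by
    have h1 := key 0 2
    simp only [Matrix.cons_val_zero, Matrix.cons_val_one, Matrix.head_cons, Matrix.cons_val_two,
      Matrix.tail_cons, one_mul] at h1
    have h2 : ∑ j, t j * -((e:ℂ) + (f:ℂ) * (r:ℂ)^2)
        = (∑ j, t j) * -((e:ℂ) + (f:ℂ) * (r:ℂ)^2) := by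
      rw [Finset.sum_mul]
    rw [h2] at h1
    rcases mul_eq_zero.mp h1 with h' | h'
    · exact h'
    · exact absurd (neg_eq_zero.mp h') hXne
  have C1 : ∑ j, t j * starRingEnd ℂ (α j) = 0 := by
    have h1 := key 1 2
    simp only [Matrix.cons_val_zero, Matrix.cons_val_one, Matrix.head_cons, Matrix.cons_val_two,
      Matrix.tail_cons] at h1
    have h2 : ∑ j, t j * (starRingEnd ℂ (α j) * -((e:ℂ) + (f:ℂ) * (r:ℂ)^2))
        = (∑ j, t j * starRingEnd ℂ (α j)) * -((e:ℂ) + (f:ℂ) * (r:ℂ)^2) := by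
      rw [Finset.sum_mul]
      exact Finset.sum_congr rfl fun j _ => by ring
    rw [h2] at h1
    rcases mul_eq_zero.mp h1 with h' | h'
    · exact h'
    · exact absurd (neg_eq_zero.mp h') hXne
  have S1 : ∑ j, t j * α j = 0 := by
    have h1 := key 1 0
    simp only [Matrix.cons_val_zero, Matrix.cons_val_one, Matrix.head_cons] at h1
    have h2 : ∀ j ∈ Finset.univ, t j * (starRingEnd ℂ (α j) * ((g:ℂ) * α j * (1 - α j)))
        = (g:ℂ) * (r:ℂ)^2 * t j - (g:ℂ) * (r:ℂ)^2 * (t j * α j) := fun j _ => by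
      linear_combination ((g:ℂ) * t j * (1 - α j)) * hconj j
    rw [Finset.sum_congr rfl h2, Finset.sum_sub_distrib, ← Finset.mul_sum, ← Finset.mul_sum,
      S0, mul_zero, zero_sub, neg_eq_zero] at h1
    rcases mul_eq_zero.mp h1 with h' | h'
    · exact absurd h' (mul_ne_zero hgC (pow_ne_zero 2 hrC))
    · exact h'
  have S2 : ∑ j, t j * α j ^ 2 = 0 := by
    have h1 := key 0 0
    simp only [Matrix.cons_val_zero, one_mul] at h1
    have h2 : ∀ j ∈ Finset.univ, t j * ((g:ℂ) * α j * (1 - α j))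
        = (g:ℂ) * (t j * α j) - (g:ℂ) * (t j * α j ^ 2) := fun j _ => by ring
    rw [Finset.sum_congr rfl h2, Finset.sum_sub_distrib, ← Finset.mul_sum, ← Finset.mul_sum,
      S1, mul_zero, zero_sub, neg_eq_zero] at h1
    rcases mul_eq_zero.mp h1 with h' | h'
    · exact absurd h' hgC
    · exact h'
  have C2 : ∑ j, t j * (starRingEnd ℂ (α j)) ^ 2 = 0 := by
    have h1 := key 1 3
    simp only [Matrix.cons_val_zero, Matrix.cons_val_one, Matrix.head_cons, Matrix.cons_val_three,
      Matrix.tail_cons] at h1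
    have h2 : ∀ j ∈ Finset.univ,
        t j * (starRingEnd ℂ (α j) * (-(starRingEnd ℂ (α j)) * ((c:ℂ) + (d:ℂ) * α j)))
        = -((c:ℂ) * (t j * (starRingEnd ℂ (α j)) ^ 2))
          - (d:ℂ) * (r:ℂ)^2 * (t j * starRingEnd ℂ (α j)) := fun j _ => by
      linear_combination (-(d:ℂ) * t j * starRingEnd ℂ (α j)) * hconj j
    rw [Finset.sum_congr rfl h2, Finset.sum_sub_distrib, ← Finset.mul_sum,
      C1, mul_zero, sub_zero, Finset.sum_neg_distrib, ← Finset.mul_sum, neg_eq_zero] at h1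
    rcases mul_eq_zero.mp h1 with h' | h'
    · exact absurd h' hcC
    · exact h'
  set s : Fin 5 → ℂ := fun j => t j * (starRingEnd ℂ (α j)) ^ 2 with hs
  have hvd : (Matrix.vandermonde α).transpose.det ≠ 0 := by
    rw [Matrix.det_transpose]
    exact Matrix.det_vandermonde_ne_zero_iff.mpr hinj
  have hmv : (Matrix.vandermonde α).transpose.mulVec s = 0 := by
    funext n
    simp only [Matrix.mulVec, dotProduct, Matrix.transpose_apply,
      Matrix.vandermonde_apply, Pi.zero_apply, hs]
    fin_cases n
    · simpa using C2
    · have h2 : ∀ j ∈ Finset.univ, α j ^ (1:ℕ) * (t j * (starRingEnd ℂ (α j)) ^ 2)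
          = (r:ℂ)^2 * (t j * starRingEnd ℂ (α j)) := fun j _ => by
        linear_combination (t j * starRingEnd ℂ (α j)) * hconj j
      rw [Finset.sum_congr rfl h2, ← Finset.mul_sum, C1, mul_zero]
    · have h2 : ∀ j ∈ Finset.univ, α j ^ (2:ℕ) * (t j * (starRingEnd ℂ (α j)) ^ 2)
          = (r:ℂ)^4 * t j := fun j _ => by
        linear_combination (t j * (starRingEnd ℂ (α j) * α j + (r:ℂ)^2)) * hconj j
      rw [Finset.sum_congr rfl h2, ← Finset.mul_sum, S0, mul_zero]
    · have h2 : ∀ j ∈ Finset.univ, α j ^ (3:ℕ) * (t j * (starRingEnd ℂ (α j)) ^ 2)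
          = (r:ℂ)^4 * (t j * α j) := fun j _ => by
        linear_combination (t j * α j * (starRingEnd ℂ (α j) * α j + (r:ℂ)^2)) * hconj j
      rw [Finset.sum_congr rfl h2, ← Finset.mul_sum, S1, mul_zero]
    · have h2 : ∀ j ∈ Finset.univ, α j ^ (4:ℕ) * (t j * (starRingEnd ℂ (α j)) ^ 2)
          = (r:ℂ)^4 * (t j * α j ^ 2) := fun j _ => by
        linear_combination (t j * α j ^ 2 * (starRingEnd ℂ (α j) * α j + (r:ℂ)^2)) * hconj j
      rw [Finset.sum_congr rfl h2, ← Finset.mul_sum, S2, mul_zero]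
  have hz := Matrix.eq_zero_of_mulVec_eq_zero hvd hmv
  have hzj := congrFun hz j
  simp only [hs, Pi.zero_apply] at hzj
  have hcne : starRingEnd ℂ (α j) ≠ 0 := by
    simpa using hα0 j
  rcases mul_eq_zero.mp hzj with h' | h'
  · exact h'
  · exact absurd h' (pow_ne_zero 2 hcne)
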